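/- arXiv:2311.17774 — 2 statements merged into one kernel-verified Lean document; each statement's English description precedes it below -/
import Mathlib

section
/- Let i < j be indices in Z_{2^n} and let g_i, g_j be rows of G_N = [[1,0],[1,1]]^{⊗n} over F_2. Then w(g_i XOR g_j) = w(g_i) if and only if w((NOT i) AND j) = 1, and w(g_i XOR g_j) > w(g_i) if and only if w((NOT i) AND j) > 1. -/
/-- Hamming weight of the binary expansion of a natural number. -/
def wt (i : ℕ) : ℕ := (Nat.digits 2 i).sum

/-- The 2×2 polar kernel [[1,0],[1,1]] over F₂. -/
def kernel : Matrix (Fin 2) (Fin 2) (ZMod 2) := !![1, 0; 1, 1]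

/-- The polar transform matrix `G_N = [[1,0],[1,1]]^{⊗ n}`, `N = 2^n`,
defined as the n-fold Kronecker power of the kernel. -/
def polarG : (n : ℕ) → Matrix (Fin (2 ^ n)) (Fin (2 ^ n)) (ZMod 2)
  | 0 => 1
  | n + 1 =>
    Matrix.reindex (finProdFinEquiv.trans (finCongr (by ring)))
      (finProdFinEquiv.trans (finCongr (by ring)))
      (Matrix.kroneckerMap (· * ·) kernel (polarG n))

/-- Hamming weight of a binary vector. -/
def rowWt {N : ℕ} (v : Fin N → ZMod 2) : ℕ :=
  (Finset.univ.filter fun j => v j ≠ 0).card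

/-! ### Auxiliary lemmas on `wt` and bitwise operations -/

lemma wt_rec (m : ℕ) : wt m = m % 2 + wt (m / 2) := by
  rcases Nat.eq_zero_or_pos m with rfl | h
  · simp [wt]
  · unfold wt; rw [Nat.digits_def' (by norm_num : 1 < 2) h]; simp [Nat.add_comm]

lemma wt_zero : wt 0 = 0 := by simp [wt]
lemma wt_one : wt 1 = 1 := by simp [wt]

lemma wt_split : ∀ (n a b : ℕ), b < 2 ^ n → wt (2 ^ n * a + b) = wt a + wt b := by
  intro n
  induction n with
  | zero => intro a b hb; interval_cases b; simp [wt_zero]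
  | succ n ih =>
    intro a b hb
    have e1 : 2 ^ (n+1) * a = 2 * (2 ^ n * a) := by ring
    have h1 : (2 ^ (n+1) * a + b) % 2 = b % 2 := by rw [e1]; omega
    have h2 : (2 ^ (n+1) * a + b) / 2 = 2 ^ n * a + b / 2 := by rw [e1]; omega
    rw [wt_rec (2 ^ (n+1) * a + b), h1, h2, ih a (b/2) (by rw [pow_succ] at hb; omega),
      wt_rec b]
    omega

lemma and_split (n a a' b b' : ℕ) (hb : b < 2 ^ n) (hb' : b' < 2 ^ n) :
    (2 ^ n * a + b) &&& (2 ^ n * a' + b') = 2 ^ n * (a &&& a') + (b &&& b') := by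
  apply Nat.eq_of_testBit_eq
  intro k
  rw [Nat.testBit_and, Nat.testBit_two_pow_mul_add _ hb, Nat.testBit_two_pow_mul_add _ hb',
    Nat.testBit_two_pow_mul_add _ (Nat.and_lt_two_pow _ hb')]
  split <;> simp [Nat.testBit_and]

lemma xor_split (n a a' b b' : ℕ) (hb : b < 2 ^ n) (hb' : b' < 2 ^ n) :
    (2 ^ n * a + b) ^^^ (2 ^ n * a' + b') = 2 ^ n * (a ^^^ a') + (b ^^^ b') := by
  apply Nat.eq_of_testBit_eq
  intro k
  rw [Nat.testBit_xor, Nat.testBit_two_pow_mul_add _ hb, Nat.testBit_two_pow_mul_add _ hb',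
    Nat.testBit_two_pow_mul_add _ (Nat.xor_lt_two_pow hb hb')]
  split <;> simp [Nat.testBit_xor]

lemma maskC : ∀ (n i j : ℕ), i < 2 ^ n → j < 2 ^ n →
    wt (i &&& j) + wt (((2 ^ n - 1) ^^^ i) &&& j) = wt j := by
  intro n
  induction n with
  | zero => intro i j hi hj; interval_cases i; interval_cases j; simp [wt_zero]
  | succ n ih =>
    intro i j hi hj
    have hpos : 0 < 2 ^ n := Nat.pow_pos (by norm_num)
    obtain ⟨x, y, hy, rfl⟩ : ∃ x y, y < 2 ^ n ∧ 2 ^ n * x + y = i :=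
      ⟨i / 2 ^ n, i % 2 ^ n, Nat.mod_lt _ hpos, Nat.div_add_mod i (2 ^ n)⟩
    obtain ⟨x', y', hy', rfl⟩ : ∃ x y, y < 2 ^ n ∧ 2 ^ n * x + y = j :=
      ⟨j / 2 ^ n, j % 2 ^ n, Nat.mod_lt _ hpos, Nat.div_add_mod j (2 ^ n)⟩
    have hx : x < 2 := by
      rcases Nat.lt_or_ge x 2 with h | h
      · exact h
      · exfalso; rw [pow_succ] at hi; nlinarith
    have hx' : x' < 2 := by
      rcases Nat.lt_or_ge x' 2 with h | h
      · exact h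
      · exfalso; rw [pow_succ] at hj; nlinarith
    have hmask : 2 ^ (n+1) - 1 = 2 ^ n * 1 + (2 ^ n - 1) := by rw [pow_succ]; omega
    have hm : 2 ^ n - 1 < 2 ^ n := by omega
    rw [hmask, xor_split n 1 x _ y hm hy,
      and_split n _ x' _ y' (Nat.xor_lt_two_pow hm hy) hy',
      and_split n x x' y y' hy hy',
      wt_split n _ _ (Nat.and_lt_two_pow _ hy'),
      wt_split n _ _ (Nat.and_lt_two_pow _ hy'),
      wt_split n x' y' hy']
    have hlow := ih y y' hy hy'
    have hhigh : wt (x &&& x') + wt ((1 ^^^ x) &&& x') = wt x' := by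
      interval_cases x <;> interval_cases x' <;>
        norm_num [show (0:ℕ) &&& 0 = 0 from by decide, show (0:ℕ) &&& 1 = 0 from by decide,
          show (1:ℕ) &&& 0 = 0 from by decide, show (1:ℕ) &&& 1 = 1 from by decide,
          show ((1:ℕ) ^^^ 0) = 1 from by decide, show ((1:ℕ) ^^^ 1) = 0 from by decide,
          wt_zero, wt_one]
    omega

lemma maskD : ∀ (n i j : ℕ), i < 2 ^ n → j < 2 ^ n → i < j →
    0 < wt (((2 ^ n - 1) ^^^ i) &&& j) := by
  intro n
  induction n with
  | zero => intro i j hi hj hij; omega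
  | succ n ih =>
    intro i j hi hj hij
    have hpos : 0 < 2 ^ n := Nat.pow_pos (by norm_num)
    obtain ⟨x, y, hy, rfl⟩ : ∃ x y, y < 2 ^ n ∧ 2 ^ n * x + y = i :=
      ⟨i / 2 ^ n, i % 2 ^ n, Nat.mod_lt _ hpos, Nat.div_add_mod i (2 ^ n)⟩
    obtain ⟨x', y', hy', rfl⟩ : ∃ x y, y < 2 ^ n ∧ 2 ^ n * x + y = j :=
      ⟨j / 2 ^ n, j % 2 ^ n, Nat.mod_lt _ hpos, Nat.div_add_mod j (2 ^ n)⟩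
    have hx : x < 2 := by
      rcases Nat.lt_or_ge x 2 with h | h
      · exact h
      · exfalso; rw [pow_succ] at hi; nlinarith
    have hx' : x' < 2 := by
      rcases Nat.lt_or_ge x' 2 with h | h
      · exact h
      · exfalso; rw [pow_succ] at hj; nlinarith
    have hmask : 2 ^ (n+1) - 1 = 2 ^ n * 1 + (2 ^ n - 1) := by rw [pow_succ]; omega
    have hm : 2 ^ n - 1 < 2 ^ n := by omega
    rw [hmask, xor_split n 1 x _ y hm hy,
      and_split n _ x' _ y' (Nat.xor_lt_two_pow hm hy) hy',
      wt_split n _ _ (Nat.and_lt_two_pow _ hy')]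
    interval_cases x <;> interval_cases x'
    · have h0 : (1 ^^^ 0) &&& 0 = 0 := by decide
      rw [h0, wt_zero]
      have := ih y y' hy hy' (by omega)
      omega
    · have h0 : (1 ^^^ 0) &&& 1 = 1 := by decide
      rw [h0, wt_one]; omega
    · exfalso; omega
    · have h0 : (1 ^^^ 1) &&& 1 = 0 := by decide
      rw [h0, wt_zero]
      have := ih y y' hy hy' (by omega)
      omega

/-! ### Auxiliary lemmas on `rowWt` and `polarG` -/

def cnt {α : Type*} [Fintype α] (v : α → ZMod 2) : ℕ :=
  (Finset.univ.filter fun a => v a ≠ 0).card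

lemma rowWt_eq_cnt {N : ℕ} (v : Fin N → ZMod 2) : rowWt v = cnt v := rfl

lemma cnt_comp_equiv {α β : Type*} [Fintype α] [Fintype β] (e : α ≃ β) (v : β → ZMod 2) :
    cnt (fun a => v (e a)) = cnt v := by
  unfold cnt
  exact Finset.card_equiv e (by simp)

lemma cnt_prod_fin2 {β : Type*} [Fintype β] (v : Fin 2 × β → ZMod 2) :
    cnt v = cnt (fun b => v (0, b)) + cnt (fun b => v (1, b)) := by
  unfold cnt
  rw [Finset.card_filter, Finset.card_filter, Finset.card_filter, Fintype.sum_prod_type,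
    Fin.sum_univ_two]

lemma cnt_zero {β : Type*} [Fintype β] : cnt (fun _ : β => (0 : ZMod 2)) = 0 := by
  simp [cnt]

/-- The reindexing equivalence used in the definition of `polarG`. -/
noncomputable def eqv (n : ℕ) : Fin 2 × Fin (2 ^ n) ≃ Fin (2 ^ (n + 1)) :=
  finProdFinEquiv.trans (finCongr (by ring))

lemma eqv_val (n : ℕ) (x : Fin 2) (y : Fin (2 ^ n)) :
    ((eqv n (x, y) : Fin (2 ^ (n+1))) : ℕ) = 2 ^ n * (x : ℕ) + (y : ℕ) := by
  simp [eqv, finProdFinEquiv]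
  ring

lemma polarG_succ_row (n : ℕ) (x : Fin 2) (y : Fin (2 ^ n)) (k : Fin (2 ^ (n+1))) :
    polarG (n+1) (eqv n (x, y)) k =
      kernel x ((eqv n).symm k).1 * polarG n y ((eqv n).symm k).2 := by
  show (Matrix.reindex (eqv n) (eqv n) (Matrix.kroneckerMap (· * ·) kernel (polarG n)))
      (eqv n (x, y)) k = _
  rw [Matrix.reindex_apply, Matrix.submatrix_apply, Equiv.symm_apply_apply]
  rfl

lemma kernel00 : kernel 0 0 = 1 := by decide
lemma kernel01 : kernel 0 1 = 0 := by decide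
lemma kernel10 : kernel 1 0 = 1 := by decide
lemma kernel11 : kernel 1 1 = 1 := by decide

lemma rowA : ∀ (n : ℕ) (i : Fin (2 ^ n)), rowWt (polarG n i) = 2 ^ wt (i : ℕ) := by
  intro n
  induction n with
  | zero =>
    intro i
    have hi : (i : ℕ) = 0 := by have h := i.isLt; norm_num at h; omega
    have hset : (Finset.univ.filter fun j => polarG 0 i j ≠ 0) = {i} := by
      ext j
      simp only [Finset.mem_filter, Finset.mem_univ, true_and, Finset.mem_singleton]
      show ¬(1 : Matrix _ _ (ZMod 2)) i j = 0 ↔ j = i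
      rw [Matrix.one_apply]
      constructor
      · intro h
        by_contra hne
        simp [Ne.symm hne] at h
      · intro h
        subst h
        simp
    show (Finset.univ.filter fun j => polarG 0 i j ≠ 0).card = _
    rw [hset, hi, wt_zero]
    simp
  | succ n ih =>
    intro i
    obtain ⟨⟨x, y⟩, rfl⟩ : ∃ q, eqv n q = i := ⟨(eqv n).symm i, Equiv.apply_symm_apply _ _⟩
    have hrow : rowWt (polarG (n+1) (eqv n (x, y))) =
        cnt (fun q : Fin 2 × Fin (2^n) => kernel x q.1 * polarG n y q.2) := by
      rw [rowWt_eq_cnt, ← cnt_comp_equiv (eqv n)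
        (fun k => polarG (n+1) (eqv n (x,y)) k)]
      congr 1
      funext q
      rw [polarG_succ_row, Equiv.symm_apply_apply]
    rw [hrow, cnt_prod_fin2, eqv_val, wt_split n _ _ y.isLt]
    rcases (by decide : ∀ z : Fin 2, z = 0 ∨ z = 1) x with rfl | rfl
    · simp only [kernel00, kernel01, one_mul, zero_mul]
      rw [cnt_zero, ← rowWt_eq_cnt, ih]
      simp [wt_zero]
    · simp only [kernel10, kernel11, one_mul]
      rw [← rowWt_eq_cnt, ih]
      simp [wt_one]
      ring

lemma rowB : ∀ (n : ℕ) (i j : Fin (2 ^ n)),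
    rowWt (polarG n i + polarG n j) + 2 * 2 ^ wt ((i : ℕ) &&& (j : ℕ)) =
      2 ^ wt (i : ℕ) + 2 ^ wt (j : ℕ) := by
  intro n
  induction n with
  | zero =>
    intro i j
    have hi : (i : ℕ) = 0 := by have h := i.isLt; norm_num at h; omega
    have hj : (j : ℕ) = 0 := by have h := j.isLt; norm_num at h; omega
    have hij : i = j := Fin.ext (by omega)
    subst hij
    have hset : (Finset.univ.filter fun k => (polarG 0 i + polarG 0 i) k ≠ 0) = ∅ := by
      ext k
      simp [Pi.add_apply, CharTwo.add_self_eq_zero]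
    show (Finset.univ.filter fun k => (polarG 0 i + polarG 0 i) k ≠ 0).card + _ = _
    rw [hset, hi, wt_zero]
    norm_num [show (0 : ℕ) &&& 0 = 0 from by decide, wt_zero]
  | succ n ih =>
    intro i j
    obtain ⟨⟨x, y⟩, rfl⟩ : ∃ q, eqv n q = i := ⟨(eqv n).symm i, Equiv.apply_symm_apply _ _⟩
    obtain ⟨⟨x', y'⟩, rfl⟩ : ∃ q, eqv n q = j := ⟨(eqv n).symm j, Equiv.apply_symm_apply _ _⟩
    have hrow : rowWt (polarG (n+1) (eqv n (x, y)) + polarG (n+1) (eqv n (x', y'))) =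
        cnt (fun q : Fin 2 × Fin (2^n) =>
          kernel x q.1 * polarG n y q.2 + kernel x' q.1 * polarG n y' q.2) := by
      rw [rowWt_eq_cnt, ← cnt_comp_equiv (eqv n)
        (fun k => (polarG (n+1) (eqv n (x,y)) + polarG (n+1) (eqv n (x',y'))) k)]
      congr 1
      funext q
      rw [Pi.add_apply, polarG_succ_row, polarG_succ_row, Equiv.symm_apply_apply]
    rw [hrow, cnt_prod_fin2, eqv_val, eqv_val,
      and_split n x x' y y' y.isLt y'.isLt,
      wt_split n _ _ (Nat.and_lt_two_pow _ y'.isLt),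
      wt_split n _ _ y.isLt, wt_split n _ _ y'.isLt]
    have hW : cnt (fun b => kernel x 0 * polarG n y b + kernel x' 0 * polarG n y' b) =
        rowWt (polarG n y + polarG n y') := by
      rw [show kernel x 0 = 1 from by rcases (by decide : ∀ z : Fin 2, z = 0 ∨ z = 1) x
            with rfl | rfl <;> decide,
          show kernel x' 0 = 1 from by rcases (by decide : ∀ z : Fin 2, z = 0 ∨ z = 1) x'
            with rfl | rfl <;> decide]
      simp only [one_mul]
      rfl
    rw [hW]
    have hIH := ih y y'
    rcases (by decide : ∀ z : Fin 2, z = 0 ∨ z = 1) x with rfl | rfl <;>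
      rcases (by decide : ∀ z : Fin 2, z = 0 ∨ z = 1) x' with rfl | rfl
    · simp only [kernel01, zero_mul, add_zero, zero_add]
      rw [cnt_zero]
      norm_num [show (0 : ℕ) &&& 0 = 0 from by decide, wt_zero]
      omega
    · simp only [kernel01, kernel11, zero_mul, one_mul, zero_add]
      have h2 : cnt (fun b => polarG n y' b) = rowWt (polarG n y') := rfl
      rw [h2, rowA]
      norm_num [show (0 : ℕ) &&& 1 = 0 from by decide, wt_zero, wt_one, pow_add, pow_one]
      omega
    · simp only [kernel01, kernel11, zero_mul, one_mul, add_zero]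
      have h2 : cnt (fun b => polarG n y b) = rowWt (polarG n y) := rfl
      rw [h2, rowA]
      norm_num [show (1 : ℕ) &&& 0 = 0 from by decide, wt_zero, wt_one, pow_add, pow_one]
      omega
    · simp only [kernel11, one_mul]
      have h2 : cnt (fun b => polarG n y b + polarG n y' b) =
          rowWt (polarG n y + polarG n y') := rfl
      rw [h2]
      norm_num [show (1 : ℕ) &&& 1 = 1 from by decide, wt_one, pow_add, pow_one]
      omega

theorem rowWt_add_eq_iff (n : ℕ) (i j : Fin (2 ^ n)) (hij : (i : ℕ) < (j : ℕ)) :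
    (rowWt (polarG n i + polarG n j) = rowWt (polarG n i) ↔
      wt (((2 ^ n - 1) ^^^ (i : ℕ)) &&& (j : ℕ)) = 1) ∧
    (rowWt (polarG n i + polarG n j) > rowWt (polarG n i) ↔
      wt (((2 ^ n - 1) ^^^ (i : ℕ)) &&& (j : ℕ)) > 1) := by
  have hB := rowB n i j
  have hC := maskC n (i : ℕ) (j : ℕ) i.isLt j.isLt
  have hD := maskD n (i : ℕ) (j : ℕ) i.isLt j.isLt hij
  rw [rowA]
  rw [← hC, pow_add] at hB
  generalize hgd : wt (((2 ^ n - 1) ^^^ (i : ℕ)) &&& (j : ℕ)) = d at hB hD ⊢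
  generalize hgc : wt ((i : ℕ) &&& (j : ℕ)) = c at hB
  have hcpos : 0 < 2 ^ c := Nat.pow_pos (by norm_num)
  have hd2 : 2 ≤ 2 ^ d := by
    calc 2 = 2 ^ 1 := (pow_one 2).symm
    _ ≤ 2 ^ d := Nat.pow_le_pow_right (by norm_num) hD
  constructor
  · constructor
    · intro h
      have hq : 2 ^ c * 2 ^ d = 2 ^ c * 2 := by omega
      have h2 : (2 : ℕ) ^ d = 2 ^ 1 := by
        rw [pow_one]
        exact Nat.eq_of_mul_eq_mul_left hcpos hq
      exact Nat.pow_right_injective (le_refl 2) h2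
    · intro h
      have hq : 2 ^ c * 2 ^ d = 2 ^ c * 2 := by rw [h, pow_one]
      omega
  · constructor
    · intro h
      have hq : 2 ^ c * 2 < 2 ^ c * 2 ^ d := by omega
      have h2 : (2 : ℕ) ^ 1 < 2 ^ d := by
        rw [pow_one]
        exact Nat.lt_of_mul_lt_mul_left hq
      exact (Nat.pow_lt_pow_iff_right (by norm_num)).mp h2
    · intro h
      have h2 : (2 : ℕ) < 2 ^ d := by
        calc (2 : ℕ) = 2 ^ 1 := (pow_one 2).symm
        _ < 2 ^ d := Nat.pow_lt_pow_right (by norm_num) h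
      have hq : 2 ^ c * 2 < 2 ^ c * 2 ^ d := (Nat.mul_lt_mul_left hcpos).mpr h2
      omega
end

section
/- Let n >= 2, r = n - 2, N = 2^n, and consider coset indices i in Z_N whose binary support S_i = {x, y} with 0 <= x < y < n (i.e., w(i) = 2). For a decreasing rate-profile I (in particular the RM(n-2, n) profile I = {i : w(i) >= 2}), the cardinality |I ∩ K_i| equals (n - 2) + (n - 2 - x) + (n - 1 - y), where K_i = { j > i : w((NOT i) AND j) = 1 }. -/
lemma wt_step (s : ℕ) : wt s = s % 2 + wt (s / 2) := by
  rcases eq_or_ne s 0 with rfl | h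
  · simp [wt]
  · unfold wt
    rw [Nat.digits_def' (by norm_num : (1:ℕ) < 2) (Nat.pos_of_ne_zero h)]
    simp

lemma wt_eq_zero_iff {s : ℕ} : wt s = 0 ↔ s = 0 := by
  constructor
  · induction s using Nat.strong_induction_on with
    | _ s ih =>
      intro h
      rcases eq_or_ne s 0 with rfl | hs
      · rfl
      · rw [wt_step] at h
        have h1 : wt (s / 2) = 0 := by omega
        have h2 : s / 2 = 0 := ih _ (Nat.div_lt_self (Nat.pos_of_ne_zero hs) one_lt_two) h1
        omega
  · rintro rfl; exact wt_zero

lemma wt_two_pow_add {m : ℕ} : ∀ {s : ℕ}, s < 2 ^ m → wt (2 ^ m + s) = 1 + wt s := by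
  induction m with
  | zero =>
    intro s hs
    interval_cases s
    rw [wt_step]; simp [wt_zero]
  | succ m ih =>
    intro s hs
    have hp : (2:ℕ) ^ (m+1) = 2 * 2 ^ m := by ring
    rw [wt_step (2 ^ (m+1) + s)]
    have h2 : (2 ^ (m+1) + s) % 2 = s % 2 := by omega
    have h3 : (2 ^ (m+1) + s) / 2 = 2 ^ m + s / 2 := by omega
    rw [h2, h3, ih (by omega), wt_step s]
    ring

lemma wt_two_pow (m : ℕ) : wt (2 ^ m) = 1 := by
  simpa [wt_zero] using wt_two_pow_add (m := m) (s := 0) (Nat.pow_pos (by norm_num))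

lemma eq_two_pow_of_wt_eq_one : ∀ {u : ℕ}, wt u = 1 → ∃ m, u = 2 ^ m := by
  intro u
  induction u using Nat.strong_induction_on with
  | _ u ih =>
    intro h
    have hu : u ≠ 0 := by rintro rfl; rw [wt_zero] at h; omega
    rw [wt_step] at h
    rcases Nat.mod_two_eq_zero_or_one u with h2 | h2
    · have h3 : wt (u / 2) = 1 := by omega
      obtain ⟨m, hm⟩ := ih _ (Nat.div_lt_self (Nat.pos_of_ne_zero hu) one_lt_two) h3
      exact ⟨m + 1, by rw [pow_succ]; omega⟩
    · have h3 : wt (u / 2) = 0 := by omega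
      have h4 : u / 2 = 0 := wt_eq_zero_iff.mp h3
      exact ⟨0, by simpa using by omega⟩

lemma testBit_two_pow' (m l : ℕ) : (2 ^ m).testBit l = decide (l = m) := by
  rcases eq_or_ne l m with rfl | h
  · simp [Nat.testBit_two_pow_self]
  · simp [Nat.testBit_two_pow_of_ne (Ne.symm h), h]

lemma testBit_pow_add {m s : ℕ} (h : s < 2 ^ m) (l : ℕ) :
    (2 ^ m + s).testBit l = (decide (l = m) || s.testBit l) := by
  rcases lt_trichotomy l m with hl | rfl | hl
  · rw [Nat.testBit_two_pow_add_gt hl]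
    simp [Nat.ne_of_lt hl]
  · rw [Nat.testBit_two_pow_add_eq, Nat.testBit_eq_false_of_lt h]
    simp
  · have h1 : 2 ^ m + s < 2 ^ l := by
      calc 2 ^ m + s < 2 ^ m + 2 ^ m := by omega
      _ = 2 ^ (m + 1) := by ring
      _ ≤ 2 ^ l := Nat.pow_le_pow_right (by norm_num) hl
    rw [Nat.testBit_eq_false_of_lt h1,
      Nat.testBit_eq_false_of_lt (lt_trans h (by omega : (2:ℕ)^m < 2 ^ l))]
    simp [Nat.ne_of_gt hl]

lemma pow_add_inj {p q s t : ℕ} (hs : s < 2 ^ p) (ht : t < 2 ^ q)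
    (h : 2 ^ p + s = 2 ^ q + t) : p = q ∧ s = t := by
  have h1 : (2:ℕ) ^ p < 2 ^ (q + 1) := by
    have : (2:ℕ) ^ (q+1) = 2 * 2 ^ q := by ring
    omega
  have h2 : (2:ℕ) ^ q < 2 ^ (p + 1) := by
    have : (2:ℕ) ^ (p+1) = 2 * 2 ^ p := by ring
    omega
  have hpq : p = q := by
    have := (Nat.pow_lt_pow_iff_right (by norm_num : 1 < 2)).mp h1
    have := (Nat.pow_lt_pow_iff_right (by norm_num : 1 < 2)).mp h2
    omega
  subst hpq
  omega

lemma mask_and {n x y m : ℕ} (a b : Bool) {j : ℕ} (hxy : x < y) (hyn : y < n) (hm : m < n)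
    (hmx : m ≠ x) (hmy : m ≠ y)
    (hj : ∀ l, j.testBit l = (decide (l = m) || a && decide (l = y) || b && decide (l = x))) :
    ((2 ^ n - 1) ^^^ (2 ^ y + 2 ^ x)) &&& j = 2 ^ m := by
  apply Nat.eq_of_testBit_eq
  intro l
  have hxy2 : (2:ℕ) ^ x < 2 ^ y := Nat.pow_lt_pow_right one_lt_two hxy
  rw [Nat.testBit_land, Nat.testBit_xor, Nat.testBit_two_pow_sub_one,
      testBit_pow_add hxy2, testBit_two_pow', testBit_two_pow', hj l]
  by_cases h1 : l = m <;> by_cases h2 : l = y <;> by_cases h3 : l = x <;>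
    by_cases h4 : l < n <;> simp_all <;> (exfalso; omega)

lemma of_mask {n x y m j : ℕ} (hxy : x < y) (hyn : y < n) (hjn : j < 2 ^ n)
    (hu : ((2 ^ n - 1) ^^^ (2 ^ y + 2 ^ x)) &&& j = 2 ^ m) :
    m < n ∧ m ≠ x ∧ m ≠ y ∧ j.testBit m = true ∧
      (∀ l, j.testBit l =
        (decide (l = m) || j.testBit y && decide (l = y) || j.testBit x && decide (l = x))) := by
  have hxy2 : (2:ℕ) ^ x < 2 ^ y := Nat.pow_lt_pow_right one_lt_two hxy
  have E : ∀ l, ((decide (l < n) ^^ (decide (l = y) || decide (l = x))) && j.testBit l)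
      = decide (l = m) := by
    intro l
    have := congrArg (fun t => t.testBit l) hu
    simpa [Nat.testBit_land, Nat.testBit_xor, Nat.testBit_two_pow_sub_one,
      testBit_pow_add hxy2, testBit_two_pow'] using this
  have hmn : m < n := by
    by_contra hc
    have := E m
    have h1 : m ≠ y := by omega
    have h2 : m ≠ x := by omega
    simp [hc, h1, h2] at this
  have hmy : m ≠ y := by
    by_contra hc
    have := E y
    simp [← hc, hmn] at this
  have hmx : m ≠ x := by
    by_contra hc
    have := E x
    have hxn : x < n := by omega
    simp [← hc, hxn, hmn, hmy] at this
  have hjm : j.testBit m = true := by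
    have := E m
    simpa [hmn, hmy, hmx] using this
  refine ⟨hmn, hmx, hmy, hjm, fun l => ?_⟩
  by_cases h1 : l = m
  · simp [h1, hjm]
  by_cases h2 : l = y
  · subst h2
    have hx : l ≠ x := by omega
    simp [h1, hx]
  by_cases h3 : l = x
  · subst h3
    simp [h1, h2]
  by_cases h4 : l < n
  · have := E l
    simpa [h1, h2, h3, h4] using this
  · have : j.testBit l = false :=
      Nat.testBit_eq_false_of_lt (lt_of_lt_of_le hjn (Nat.pow_le_pow_right (by norm_num) (by omega)))
    simp [this, h1, h2, h3]

lemma testBit_n3 {p q r a b c : ℕ} (hqp : q < p) (hrq : r < q)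
    (ha : a ≤ 1) (hb : b ≤ 1) (hc : c ≤ 1) (l : ℕ) :
    (a * 2 ^ p + (b * 2 ^ q + c * 2 ^ r)).testBit l =
      (decide (a = 1) && decide (l = p) || decide (b = 1) && decide (l = q) ||
        decide (c = 1) && decide (l = r)) := by
  have h0r : 0 < (2:ℕ) ^ r := Nat.pow_pos (by norm_num)
  have h0q : 0 < (2:ℕ) ^ q := Nat.pow_pos (by norm_num)
  have h0p : 0 < (2:ℕ) ^ p := Nat.pow_pos (by norm_num)
  have h1 : (2:ℕ) ^ r + 2 ^ r ≤ 2 ^ q := by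
    have : (2:ℕ) ^ (r+1) ≤ 2 ^ q := Nat.pow_le_pow_right (by norm_num) hrq
    have h : (2:ℕ) ^ (r+1) = 2 * 2 ^ r := by ring
    omega
  have h2 : (2:ℕ) ^ q + 2 ^ q ≤ 2 ^ p := by
    have : (2:ℕ) ^ (q+1) ≤ 2 ^ p := Nat.pow_le_pow_right (by norm_num) hqp
    have h : (2:ℕ) ^ (q+1) = 2 * 2 ^ q := by ring
    omega
  interval_cases a <;> interval_cases b <;> interval_cases c <;>
    simp only [one_mul, zero_mul, zero_add, add_zero] <;>
    [skip; skip; skip; skip; skip; skip; skip; skip]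
  · simp [Nat.zero_testBit]
  · rw [testBit_two_pow']; simp
  · rw [testBit_two_pow']; simp
  · rw [testBit_pow_add (by omega)]; simp [testBit_two_pow']
  · rw [testBit_two_pow']; simp
  · rw [testBit_pow_add (by omega)]; simp [testBit_two_pow']
  · rw [testBit_pow_add (by omega)]; simp [testBit_two_pow']
  · rw [testBit_pow_add (by omega : (2:ℕ)^q + 2^r < 2^p),
        testBit_pow_add (by omega : (2:ℕ)^r < 2^q)]
    simp [testBit_two_pow', Bool.or_assoc]

lemma wt_n3 {p q r a b c : ℕ} (hqp : q < p) (hrq : r < q)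
    (ha : a ≤ 1) (hb : b ≤ 1) (hc : c ≤ 1) :
    wt (a * 2 ^ p + (b * 2 ^ q + c * 2 ^ r)) = a + b + c := by
  have h0r : 0 < (2:ℕ) ^ r := Nat.pow_pos (by norm_num)
  have h0q : 0 < (2:ℕ) ^ q := Nat.pow_pos (by norm_num)
  have h0p : 0 < (2:ℕ) ^ p := Nat.pow_pos (by norm_num)
  have h1 : (2:ℕ) ^ r + 2 ^ r ≤ 2 ^ q := by
    have : (2:ℕ) ^ (r+1) ≤ 2 ^ q := Nat.pow_le_pow_right (by norm_num) hrq
    have h : (2:ℕ) ^ (r+1) = 2 * 2 ^ r := by ring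
    omega
  have h2 : (2:ℕ) ^ q + 2 ^ q ≤ 2 ^ p := by
    have : (2:ℕ) ^ (q+1) ≤ 2 ^ p := Nat.pow_le_pow_right (by norm_num) hqp
    have h : (2:ℕ) ^ (q+1) = 2 * 2 ^ q := by ring
    omega
  interval_cases a <;> interval_cases b <;> interval_cases c <;>
    simp only [one_mul, zero_mul, zero_add, add_zero]
  · exact wt_zero
  · exact wt_two_pow r
  · exact wt_two_pow q
  · rw [wt_two_pow_add (by omega), wt_two_pow]
  · exact wt_two_pow p
  · rw [wt_two_pow_add (by omega : (2:ℕ)^r < 2^p), wt_two_pow]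
  · rw [wt_two_pow_add (by omega : (2:ℕ)^q < 2^p), wt_two_pow]
  · rw [wt_two_pow_add (by omega : (2:ℕ)^q + 2^r < 2^p),
        wt_two_pow_add (by omega : (2:ℕ)^r < 2^q), wt_two_pow]

lemma n3_lt {p q r a b c n : ℕ} (hqp : q < p) (hrq : r < q) (hpn : p < n)
    (ha : a ≤ 1) (hb : b ≤ 1) (hc : c ≤ 1) :
    a * 2 ^ p + (b * 2 ^ q + c * 2 ^ r) < 2 ^ n := by
  have h1 : (2:ℕ) ^ r + 2 ^ r ≤ 2 ^ q := by
    have : (2:ℕ) ^ (r+1) ≤ 2 ^ q := Nat.pow_le_pow_right (by norm_num) hrq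
    have h : (2:ℕ) ^ (r+1) = 2 * 2 ^ r := by ring
    omega
  have h2 : (2:ℕ) ^ q + 2 ^ q ≤ 2 ^ p := by
    have : (2:ℕ) ^ (q+1) ≤ 2 ^ p := Nat.pow_le_pow_right (by norm_num) hqp
    have h : (2:ℕ) ^ (q+1) = 2 * 2 ^ q := by ring
    omega
  have h3 : (2:ℕ) ^ p + 2 ^ p ≤ 2 ^ n := by
    have : (2:ℕ) ^ (p+1) ≤ 2 ^ n := Nat.pow_le_pow_right (by norm_num) hpn
    have h : (2:ℕ) ^ (p+1) = 2 * 2 ^ p := by ring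
    omega
  have e1 : a * 2 ^ p ≤ 1 * 2 ^ p := Nat.mul_le_mul_right _ ha
  have e2 : b * 2 ^ q ≤ 1 * 2 ^ q := Nat.mul_le_mul_right _ hb
  have e3 : c * 2 ^ r ≤ 1 * 2 ^ r := Nat.mul_le_mul_right _ hc
  have h0r : 0 < (2:ℕ) ^ r := Nat.pow_pos (by norm_num)
  omega

lemma decide_toNat_eq_one (b : Bool) : decide (b.toNat = 1) = b := by cases b <;> simp

/-- For `i` with binary support `{x, y}`, `x < y < n`, the number of indices
`j ∈ I ∩ K_i`, where `I = {j < 2^n : wt j ≥ 2}` is the RM(n-2, n) profile and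
`K_i = {j > i : wt((NOT i) AND j) = 1}`, equals `(n-2) + (n-2-x) + (n-1-y)`. -/
theorem card_I_inter_K (n : ℕ) (hn : 2 ≤ n) (i x y : ℕ) (hxy : x < y) (hyn : y < n)
    (hi : i < 2 ^ n) (hsupp : ∀ l, i.testBit l = true ↔ l = x ∨ l = y) :
    (((Finset.range (2 ^ n)).filter fun j => 2 ≤ wt j) ∩
      ((Finset.range (2 ^ n)).filter fun j =>
        i < j ∧ wt (((2 ^ n - 1) ^^^ i) &&& j) = 1)).card =
      (n - 2) + (n - 2 - x) + (n - 1 - y) := by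
  classical
  have hxn : x < n := by omega
  have h0 : ∀ u : ℕ, 0 < (2:ℕ) ^ u := fun u => Nat.pow_pos (by norm_num)
  have hP : ∀ {u v : ℕ}, u < v → (2:ℕ) ^ u + 2 ^ u ≤ 2 ^ v := by
    intro u v huv
    have : (2:ℕ) ^ (u+1) ≤ 2 ^ v := Nat.pow_le_pow_right (by norm_num) huv
    have h : (2:ℕ) ^ (u+1) = 2 * 2 ^ u := by ring
    omega
  have hpxy : (2:ℕ) ^ x < 2 ^ y := by have := hP hxy; have := h0 x; omega
  have hi_eq : i = 2 ^ y + 2 ^ x := by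
    apply Nat.eq_of_testBit_eq
    intro l
    rw [testBit_pow_add hpxy, testBit_two_pow']
    rcases eq_or_ne l x with rfl | hlx
    · simp [(hsupp l).mpr (Or.inl rfl), (by omega : l ≠ y)]
    rcases eq_or_ne l y with rfl | hly
    · simp [(hsupp l).mpr (Or.inr rfl)]
    · have hf : i.testBit l = false := by
        cases h : i.testBit l
        · rfl
        · rcases (hsupp l).mp h with rfl | rfl <;> simp_all
      simp [hf, hlx, hly]
  subst hi_eq
  set A : Finset ℕ :=
    ((Finset.Ico (y+1) n) ×ˢ ((Finset.range 2 ×ˢ Finset.range 2).erase (0,0))).image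
      (fun p => 2 ^ p.1 + (p.2.1 * 2 ^ y + p.2.2 * 2 ^ x)) with hA
  set B : Finset ℕ :=
    ((Finset.Ioo x y) ×ˢ Finset.range 2).image
      (fun p => 2 ^ y + (2 ^ p.1 + p.2 * 2 ^ x)) with hB
  set C : Finset ℕ :=
    (Finset.range x).image (fun m => 2 ^ y + (2 ^ x + 2 ^ m)) with hC
  have hSeq : (((Finset.range (2 ^ n)).filter fun j => 2 ≤ wt j) ∩
      ((Finset.range (2 ^ n)).filter fun j =>
        (2 ^ y + 2 ^ x) < j ∧ wt (((2 ^ n - 1) ^^^ (2 ^ y + 2 ^ x)) &&& j) = 1)) = A ∪ B ∪ C := by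
    ext j
    simp only [Finset.mem_inter, Finset.mem_filter, Finset.mem_range]
    constructor
    · rintro ⟨⟨hj1, hj2⟩, -, hj3, hj4⟩
      obtain ⟨m, hm⟩ := eq_two_pow_of_wt_eq_one hj4
      obtain ⟨hmn, hmx, hmy, hjm, hj⟩ := of_mask hxy hyn hj1 hm
      have hay : (j.testBit y).toNat ≤ 1 := by cases j.testBit y <;> simp
      have hbx : (j.testBit x).toNat ≤ 1 := by cases j.testBit x <;> simp
      rcases lt_trichotomy y m with h | h | h
      · -- m > y : j ∈ A
        have hjval : j = 1 * 2 ^ m + ((j.testBit y).toNat * 2 ^ y + (j.testBit x).toNat * 2 ^ x) := by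
          apply Nat.eq_of_testBit_eq
          intro l
          rw [hj l, testBit_n3 h hxy le_rfl hay hbx]
          simp [decide_toNat_eq_one]
        have hwt : wt j = 1 + (j.testBit y).toNat + (j.testBit x).toNat := by
          have h' := wt_n3 h hxy le_rfl hay hbx
          rw [← hjval] at h'
          omega
        refine Finset.mem_union_left _ (Finset.mem_union_left _ ?_)
        rw [hA, Finset.mem_image]
        refine ⟨(m, ((j.testBit y).toNat, (j.testBit x).toNat)), ?_, ?_⟩
        · simp only [Finset.mem_product, Finset.mem_Ico, Finset.mem_erase, Finset.mem_range]
          refine ⟨⟨by omega, hmn⟩, ?_, by omega, by omega⟩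
          intro hcon
          rw [Prod.mk.injEq] at hcon
          omega
        · simp only
          conv_rhs => rw [hjval]
          try ring
      · exact absurd h.symm hmy
      · -- m < y
        rcases lt_trichotomy x m with h' | h' | h'
        · -- x < m < y : j ∈ B, need testBit y = true
          have hjval : j = (j.testBit y).toNat * 2 ^ y + (1 * 2 ^ m + (j.testBit x).toNat * 2 ^ x) := by
            apply Nat.eq_of_testBit_eq
            intro l
            rw [hj l, testBit_n3 h h' hay le_rfl hbx]
            simp [decide_toNat_eq_one, Bool.or_comm, Bool.or_left_comm, Bool.or_assoc]
          cases hy1 : j.testBit y with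
          | false =>
            exfalso
            rw [hy1] at hjval
            simp only [Bool.toNat_false, zero_mul, zero_add, one_mul] at hjval
            have e2 : (j.testBit x).toNat * 2 ^ x ≤ 1 * 2 ^ x := Nat.mul_le_mul_right _ hbx
            have := hP h
            have := hP h'
            have := h0 x
            omega
          | true =>
            refine Finset.mem_union_left _ (Finset.mem_union_right _ ?_)
            rw [hB, Finset.mem_image]
            refine ⟨(m, (j.testBit x).toNat), ?_, ?_⟩
            · simp only [Finset.mem_product, Finset.mem_Ioo, Finset.mem_range]
              exact ⟨⟨h', h⟩, by omega⟩
            · simp only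
              rw [hy1] at hjval
              simp only [Bool.toNat_true, one_mul] at hjval
              conv_rhs => rw [hjval]
              try ring
        · exact absurd h'.symm hmx
        · -- m < x : j ∈ C, need both bits true
          have hjval : j = (j.testBit y).toNat * 2 ^ y + ((j.testBit x).toNat * 2 ^ x + 1 * 2 ^ m) := by
            apply Nat.eq_of_testBit_eq
            intro l
            rw [hj l, testBit_n3 hxy h' hay hbx le_rfl]
            simp [decide_toNat_eq_one, Bool.or_comm, Bool.or_left_comm, Bool.or_assoc]
          have hy1 : j.testBit y = true := by
            by_contra hcon
            rw [Bool.not_eq_true] at hcon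
            rw [hcon] at hjval
            simp only [Bool.toNat_false, zero_mul, zero_add, one_mul] at hjval
            have e2 : (j.testBit x).toNat * 2 ^ x ≤ 1 * 2 ^ x := Nat.mul_le_mul_right _ hbx
            have := hP h'
            have := hP hxy
            have := h0 m
            omega
          have hx1 : j.testBit x = true := by
            by_contra hcon
            rw [Bool.not_eq_true] at hcon
            rw [hy1, hcon] at hjval
            simp only [Bool.toNat_false, Bool.toNat_true, zero_mul, zero_add, one_mul] at hjval
            have := hP h'
            have := h0 m
            omega
          refine Finset.mem_union_right _ ?_
          rw [hC, Finset.mem_image]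
          refine ⟨m, by simp [Finset.mem_range, h'], ?_⟩
          rw [hy1, hx1] at hjval
          simp only [Bool.toNat_true, one_mul] at hjval
          conv_rhs => rw [hjval]
          try ring
    · intro hj
      rcases Finset.mem_union.mp hj with hj' | hjC
      · rcases Finset.mem_union.mp hj' with hjA | hjB
        · -- A
          rw [hA, Finset.mem_image] at hjA
          obtain ⟨⟨m, a, b⟩, hmem, rfl⟩ := hjA
          dsimp only
          simp only [Finset.mem_product, Finset.mem_Ico, Finset.mem_erase, Finset.mem_range] at hmem
          obtain ⟨⟨hym, hmn⟩, hab, ha, hb⟩ := hmem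
          have hab' : ¬(a = 0 ∧ b = 0) := by
            intro hcon
            exact hab (by rw [Prod.mk.injEq]; omega)
          have hval : 2 ^ m + (a * 2 ^ y + b * 2 ^ x) = 1 * 2 ^ m + (a * 2 ^ y + b * 2 ^ x) := by
            ring
          have hlt : 2 ^ m + (a * 2 ^ y + b * 2 ^ x) < 2 ^ n := by
            rw [hval]; exact n3_lt (by omega) hxy hmn le_rfl (by omega) (by omega)
          have hwt : wt (2 ^ m + (a * 2 ^ y + b * 2 ^ x)) = 1 + a + b := by
            rw [hval, wt_n3 (by omega) hxy le_rfl (by omega) (by omega)]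
            try omega
          have hmask : ((2 ^ n - 1) ^^^ (2 ^ y + 2 ^ x)) &&&
              (2 ^ m + (a * 2 ^ y + b * 2 ^ x)) = 2 ^ m := by
            apply mask_and (decide (a = 1)) (decide (b = 1)) hxy hyn hmn (by omega) (by omega)
            intro l
            rw [hval, testBit_n3 (by omega : y < m) hxy le_rfl (by omega) (by omega)]
            simp
          refine ⟨⟨hlt, by omega⟩, hlt, ?_, by rw [hmask, wt_two_pow]⟩
          have e1 : a * 2 ^ y ≤ 1 * 2 ^ y := Nat.mul_le_mul_right _ (by omega)
          have := hP hxy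
          have := hP (show y < m by omega)
          omega
        · -- B
          rw [hB, Finset.mem_image] at hjB
          obtain ⟨⟨m, b⟩, hmem, rfl⟩ := hjB
          dsimp only
          simp only [Finset.mem_product, Finset.mem_Ioo, Finset.mem_range] at hmem
          obtain ⟨⟨hxm, hmy⟩, hb⟩ := hmem
          have hval : 2 ^ y + (2 ^ m + b * 2 ^ x) = 1 * 2 ^ y + (1 * 2 ^ m + b * 2 ^ x) := by
            ring
          have hlt : 2 ^ y + (2 ^ m + b * 2 ^ x) < 2 ^ n := by
            rw [hval]; exact n3_lt hmy hxm hyn le_rfl le_rfl (by omega)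
          have hwt : wt (2 ^ y + (2 ^ m + b * 2 ^ x)) = 2 + b := by
            rw [hval, wt_n3 hmy hxm le_rfl le_rfl (by omega)]
            try omega
          have hmask : ((2 ^ n - 1) ^^^ (2 ^ y + 2 ^ x)) &&&
              (2 ^ y + (2 ^ m + b * 2 ^ x)) = 2 ^ m := by
            apply mask_and true (decide (b = 1)) hxy hyn (by omega) (by omega) (by omega)
            intro l
            rw [hval, testBit_n3 hmy hxm le_rfl le_rfl (by omega)]
            simp [Bool.or_comm, Bool.or_left_comm, Bool.or_assoc]
          refine ⟨⟨hlt, by omega⟩, hlt, ?_, by rw [hmask, wt_two_pow]⟩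
          have := hP hxm
          have := h0 x
          omega
      · -- C
        rw [hC, Finset.mem_image] at hjC
        obtain ⟨m, hmem, rfl⟩ := hjC
        rw [Finset.mem_range] at hmem
        have hval : 2 ^ y + (2 ^ x + 2 ^ m) = 1 * 2 ^ y + (1 * 2 ^ x + 1 * 2 ^ m) := by
          ring
        have hlt : 2 ^ y + (2 ^ x + 2 ^ m) < 2 ^ n := by
          rw [hval]; exact n3_lt hxy hmem hyn le_rfl le_rfl le_rfl
        have hwt : wt (2 ^ y + (2 ^ x + 2 ^ m)) = 3 := by
          rw [hval, wt_n3 hxy hmem le_rfl le_rfl le_rfl]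
        have hmask : ((2 ^ n - 1) ^^^ (2 ^ y + 2 ^ x)) &&&
            (2 ^ y + (2 ^ x + 2 ^ m)) = 2 ^ m := by
          apply mask_and true true hxy hyn (by omega) (by omega) (by omega)
          intro l
          rw [hval, testBit_n3 hxy hmem le_rfl le_rfl le_rfl]
          simp [Bool.or_comm, Bool.or_left_comm, Bool.or_assoc]
        refine ⟨⟨hlt, by omega⟩, hlt, by have := h0 m; omega, by rw [hmask, wt_two_pow]⟩
  rw [hSeq]
  -- disjointness
  have hAB : Disjoint A B := by
    rw [Finset.disjoint_left]
    intro j hja hjb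
    rw [hA, Finset.mem_image] at hja
    rw [hB, Finset.mem_image] at hjb
    obtain ⟨⟨m, a, b⟩, hmem, hv⟩ := hja
    obtain ⟨⟨m', b'⟩, hmem', hv'⟩ := hjb
    simp only [Finset.mem_product, Finset.mem_Ico, Finset.mem_erase, Finset.mem_range,
      Finset.mem_Ioo] at hmem hmem'
    dsimp only at hv hv'
    have e1 : a * 2 ^ y ≤ 1 * 2 ^ y := Nat.mul_le_mul_right _ (by omega)
    have e2 : b * 2 ^ x ≤ 1 * 2 ^ x := Nat.mul_le_mul_right _ (by omega)
    have e3 : b' * 2 ^ x ≤ 1 * 2 ^ x := Nat.mul_le_mul_right _ (by omega)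
    have := hP (show y < m by omega)
    have := hP (show m' < y by omega)
    have := hP (show x < m' by omega)
    omega
  have hAC : Disjoint A C := by
    rw [Finset.disjoint_left]
    intro j hja hjc
    rw [hA, Finset.mem_image] at hja
    rw [hC, Finset.mem_image] at hjc
    obtain ⟨⟨m, a, b⟩, hmem, hv⟩ := hja
    obtain ⟨m', hmem', hv'⟩ := hjc
    simp only [Finset.mem_product, Finset.mem_Ico, Finset.mem_erase, Finset.mem_range] at hmem hmem'
    dsimp only at hv hv'
    have e1 : a * 2 ^ y ≤ 1 * 2 ^ y := Nat.mul_le_mul_right _ (by omega)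
    have e2 : b * 2 ^ x ≤ 1 * 2 ^ x := Nat.mul_le_mul_right _ (by omega)
    have := hP (show y < m by omega)
    have := hP (show m' < x by omega)
    have := hP hxy
    omega
  have hBC : Disjoint B C := by
    rw [Finset.disjoint_left]
    intro j hjb hjc
    rw [hB, Finset.mem_image] at hjb
    rw [hC, Finset.mem_image] at hjc
    obtain ⟨⟨m, b⟩, hmem, hv⟩ := hjb
    obtain ⟨m', hmem', hv'⟩ := hjc
    simp only [Finset.mem_product, Finset.mem_Ioo, Finset.mem_range] at hmem hmem'
    dsimp only at hv hv'
    have e2 : b * 2 ^ x ≤ 1 * 2 ^ x := Nat.mul_le_mul_right _ (by omega)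
    have heq : 2 ^ m + b * 2 ^ x = 2 ^ x + 2 ^ m' := by omega
    have h1 : b * 2 ^ x < 2 ^ m := by
      have := hP (show x < m by omega)
      have := h0 x
      omega
    have h2 : (2:ℕ) ^ m' < 2 ^ x := by
      have := hP (show m' < x by omega)
      have := h0 m'
      omega
    obtain ⟨hmx', -⟩ := pow_add_inj h1 h2 heq
    omega
  rw [Finset.card_union_of_disjoint (by
    rw [Finset.disjoint_union_left]; exact ⟨hAC, hBC⟩),
    Finset.card_union_of_disjoint hAB]
  have hcardA : A.card = (n - (y + 1)) * 3 := by
    rw [hA, Finset.card_image_of_injOn]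
    · rw [Finset.card_product, Nat.card_Ico, Finset.card_erase_of_mem (by decide),
        Finset.card_product]
      simp
    · rintro ⟨m, a, b⟩ hp ⟨m', a', b'⟩ hp' heq
      rw [Finset.mem_coe] at hp hp'
      simp only [Finset.mem_product, Finset.mem_Ico, Finset.mem_erase, Finset.mem_range] at hp hp'
      obtain ⟨⟨hym, hmn⟩, -, ha, hb⟩ := hp
      obtain ⟨⟨hym', hmn'⟩, -, ha', hb'⟩ := hp'
      dsimp only at heq
      have e1 : a * 2 ^ y ≤ 1 * 2 ^ y := Nat.mul_le_mul_right _ (by omega)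
      have e2 : b * 2 ^ x ≤ 1 * 2 ^ x := Nat.mul_le_mul_right _ (by omega)
      have e3 : a' * 2 ^ y ≤ 1 * 2 ^ y := Nat.mul_le_mul_right _ (by omega)
      have e4 : b' * 2 ^ x ≤ 1 * 2 ^ x := Nat.mul_le_mul_right _ (by omega)
      have h1 : a * 2 ^ y + b * 2 ^ x < 2 ^ m := by
        have := hP (show y < m by omega)
        have := h0 x
        omega
      have h1' : a' * 2 ^ y + b' * 2 ^ x < 2 ^ m' := by
        have := hP (show y < m' by omega)
        have := h0 x
        omega
      obtain ⟨hmm, hteq⟩ := pow_add_inj h1 h1' heq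
      subst hmm
      have hab : a = a' ∧ b = b' := by
        have := h0 x
        have := h0 y
        interval_cases a <;> interval_cases a' <;> interval_cases b <;> interval_cases b' <;>
          omega
      obtain ⟨rfl, rfl⟩ := hab
      rfl
  have hcardB : B.card = (y - (x + 1)) * 2 := by
    rw [hB, Finset.card_image_of_injOn]
    · rw [Finset.card_product, Nat.card_Ioo, Finset.card_range]
      omega
    · rintro ⟨m, b⟩ hp ⟨m', b'⟩ hp' heq
      rw [Finset.mem_coe] at hp hp'
      simp only [Finset.mem_product, Finset.mem_Ioo, Finset.mem_range] at hp hp'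
      obtain ⟨⟨hxm, hmy⟩, hb⟩ := hp
      obtain ⟨⟨hxm', hmy'⟩, hb'⟩ := hp'
      dsimp only at heq
      have e2 : b * 2 ^ x ≤ 1 * 2 ^ x := Nat.mul_le_mul_right _ (by omega)
      have e4 : b' * 2 ^ x ≤ 1 * 2 ^ x := Nat.mul_le_mul_right _ (by omega)
      have heq' : 2 ^ m + b * 2 ^ x = 2 ^ m' + b' * 2 ^ x := by omega
      have h1 : b * 2 ^ x < 2 ^ m := by
        have := hP hxm
        have := h0 x
        omega
      have h1' : b' * 2 ^ x < 2 ^ m' := by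
        have := hP hxm'
        have := h0 x
        omega
      obtain ⟨hmm, hteq⟩ := pow_add_inj h1 h1' heq'
      subst hmm
      have hbb : b = b' := by
        have := h0 x
        interval_cases b <;> interval_cases b' <;> omega
      subst hbb
      rfl
  have hcardC : C.card = x := by
    rw [hC, Finset.card_image_of_injOn, Finset.card_range]
    rintro m hp m' hp' heq
    dsimp only at heq
    have heq' : (2:ℕ) ^ m = 2 ^ m' := by omega
    exact Nat.pow_right_injective (by norm_num) heq'
  rw [hcardA, hcardB, hcardC]
  omega
end
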